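/- Let f be convex and differentiable, Q convex compact, x_k ∈ Q, s_k ∈ Q minimizing ⟪∇f(x_k), s⟫ over Q, d_k = s_k - x_k, L_k > 0. Assume ⟪∇f(x_k), d_k⟫ ≤ -L_k‖d_k‖² (the full-step condition θ_k ≥ 1) and the descent condition f(x_k + d_k) ≤ f(x_k) + ⟪∇f(x_k), d_k⟫ + (L_k/2)‖d_k‖². Then, with x* a minimizer of f on Q and x_{k+1} = x_k + d_k, we have f(x_{k+1}) - f(x*) ≤ (1/2)·min(L_k‖d_k‖², f(x_k) - f(x*)). -/

import Mathlib

open RealInnerProductSpace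

lemma grad_ineq {n : ℕ} (f : EuclideanSpace ℝ (Fin n) → ℝ)
    (hconv : ConvexOn ℝ Set.univ f) (hdiff : Differentiable ℝ f)
    (x y : EuclideanSpace ℝ (Fin n)) :
    f x + ⟪gradient f x, y - x⟫ ≤ f y := by
  set g : ℝ → ℝ := fun t => f (x + t • (y - x)) with hg
  have hgconv : ConvexOn ℝ Set.univ g := by
    have := hconv.comp_affineMap (AffineMap.lineMap x y : ℝ →ᵃ[ℝ] _)
    simp only [Set.preimage_univ] at this
    have heq : g = f ∘ ⇑(AffineMap.lineMap x y) := by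
      funext t
      simp only [g, Function.comp_apply, AffineMap.lineMap_apply, vsub_eq_sub, vadd_eq_add]
      rw [add_comm]
    rw [heq]
    exact this
  have hline : HasDerivAt (fun t : ℝ => x + t • (y - x)) (y - x) 0 := by
    simpa using ((hasDerivAt_id (0:ℝ)).smul_const (y - x)).const_add x
  have hgradf : HasGradientAt f (gradient f x) x := (hdiff x).hasGradientAt
  have hfderiv : HasFDerivAt f
      ((InnerProductSpace.toDual ℝ _) (gradient f x) :
        EuclideanSpace ℝ (Fin n) →L[ℝ] ℝ) x := by
    rwa [hasGradientAt_iff_hasFDerivAt] at hgradf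
  have hfderiv' : HasFDerivAt f
      ((InnerProductSpace.toDual ℝ _) (gradient f x) :
        EuclideanSpace ℝ (Fin n) →L[ℝ] ℝ) (x + (0:ℝ) • (y - x)) := by
    simpa using hfderiv
  have hgd : HasDerivAt g (⟪gradient f x, y - x⟫) 0 := by
    have := hfderiv'.comp_hasDerivAt 0 hline
    rw [InnerProductSpace.toDual_apply_apply] at this
    exact this
  have h01 : (0:ℝ) < 1 := zero_lt_one
  have hslope := hgconv.le_slope_of_hasDerivAt (Set.mem_univ 0) (Set.mem_univ 1) h01 hgd
  have hg0 : g 0 = f x := by simp [g]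
  have hg1 : g 1 = f y := by simp [g]
  have : slope g 0 1 = g 1 - g 0 := by simp [slope_def_field]
  rw [this, hg0, hg1] at hslope
  linarith

theorem stmt1 {n : ℕ} (f : EuclideanSpace ℝ (Fin n) → ℝ)
    (Q : Set (EuclideanSpace ℝ (Fin n)))
    (hQconv : Convex ℝ Q) (hQcomp : IsCompact Q)
    (hconv : ConvexOn ℝ Set.univ f) (hdiff : Differentiable ℝ f)
    (xk sk xstar : EuclideanSpace ℝ (Fin n))
    (hxk : xk ∈ Q) (hsk : sk ∈ Q) (hxstar : xstar ∈ Q)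
    (hskmin : ∀ s ∈ Q, ⟪gradient f xk, sk⟫ ≤ ⟪gradient f xk, s⟫)
    (hmin : ∀ y ∈ Q, f xstar ≤ f y)
    (L : ℝ) (hL : 0 < L)
    (hfull : ⟪gradient f xk, sk - xk⟫ ≤ -(L * ‖sk - xk‖ ^ 2))
    (hdesc : f (xk + (sk - xk)) ≤
      f xk + ⟪gradient f xk, sk - xk⟫ + L / 2 * ‖sk - xk‖ ^ 2) :
    f (xk + (sk - xk)) - f xstar ≤
      1 / 2 * min (L * ‖sk - xk‖ ^ 2) (f xk - f xstar) := by
  have hgrad := grad_ineq f hconv hdiff xk xstar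
  have hsx : ⟪gradient f xk, sk - xk⟫ ≤ ⟪gradient f xk, xstar - xk⟫ := by
    rw [inner_sub_right, inner_sub_right]
    have := hskmin xstar hxstar
    linarith
  -- gap inequality: f xk - f xstar ≤ -⟪g, sk - xk⟫
  have hgap : f xk - f xstar ≤ -⟪gradient f xk, sk - xk⟫ := by linarith
  rcases le_total (L * ‖sk - xk‖ ^ 2) (f xk - f xstar) with h | h
  · rw [min_eq_left h]
    linarith
  · rw [min_eq_right h]
    linarith
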